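/- For the second Ding–Helleseth sequence, the product over a ∈ P satisfies Π_{a ∈ P} S(ξ_N^a) = ((p−1)²·η₀^{(q)}·η₁^{(q)})^{(q−1)/2}. -/

import Mathlib

open Finset

/-- `ξ_N = exp(2πi/N)`, a primitive `N`-th root of unity. -/
noncomputable def DHxi (N : ℕ) : ℂ := Complex.exp (2 * Real.pi * Complex.I / N)

/-- Gauss period: `Σ_{a ∈ D} ξ_N^a`. -/
noncomputable def DHeta (N : ℕ) (D : Finset (ZMod N)) : ℂ := ∑ a ∈ D, DHxi N ^ a.val

/-- Ding–Helleseth generalized cyclotomic class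
`D₀ = {g^(2t) x^i : 0 ≤ t ≤ e/2 - 1, i ∈ {0,1}}` in `ZMod (p*q)`, where `e = (p-1)(q-1)/2`. -/
def DHD0 (p q g x : ℕ) : Finset (ZMod (p * q)) :=
  (Finset.range ((p - 1) * (q - 1) / 4) ×ˢ Finset.range 2).image
    (fun ti => (g : ZMod (p * q)) ^ (2 * ti.1) * (x : ZMod (p * q)) ^ ti.2)

/-- `D₁ = g · D₀`. -/
def DHD1 (p q g x : ℕ) : Finset (ZMod (p * q)) :=
  (DHD0 p q g x).image (fun d => (g : ZMod (p * q)) * d)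

/-- `P = {p, 2p, …, (q-1)p}` as a subset of `ZMod (p*q)`. -/
def DHP (p q : ℕ) : Finset (ZMod (p * q)) :=
  (Finset.Icc 1 (q - 1)).image (fun k => ((k * p : ℕ) : ZMod (p * q)))

/-- `Q = {q, 2q, …, (p-1)q}` as a subset of `ZMod (p*q)`. -/
def DHQ (p q : ℕ) : Finset (ZMod (p * q)) :=
  (Finset.Icc 1 (p - 1)).image (fun k => ((k * q : ℕ) : ZMod (p * q)))

/-- First Ding–Helleseth sequence: `s_i = 1` iff `i mod N ∈ D₁ ∪ P`. -/
def DHs1 (p q g x : ℕ) (i : ℕ) : ℕ :=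
  if (i : ZMod (p * q)) ∈ DHD1 p q g x ∪ DHP p q then 1 else 0

/-- Second Ding–Helleseth sequence: `s_i = 1` iff `i mod N ∈ D₁ ∪ Q`. -/
def DHs2 (p q g x : ℕ) (i : ℕ) : ℕ :=
  if (i : ZMod (p * q)) ∈ DHD1 p q g x ∪ DHQ p q then 1 else 0

/-- Circulant matrix of the first sequence: `a_{i,j} = s_{(i-j) mod N}`. -/
noncomputable def DHA1 (p q g x : ℕ) : Matrix (Fin (p * q)) (Fin (p * q)) ℂ :=
  fun i j => (DHs1 p q g x ((((i : ℕ) : ZMod (p * q)) - ((j : ℕ) : ZMod (p * q))).val) : ℂ)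

/-- Circulant matrix of the second sequence: `a_{i,j} = s_{(i-j) mod N}`. -/
noncomputable def DHA2 (p q g x : ℕ) : Matrix (Fin (p * q)) (Fin (p * q)) ℂ :=
  fun i j => (DHs2 p q g x ((((i : ℕ) : ZMod (p * q)) - ((j : ℕ) : ZMod (p * q))).val) : ℂ)

/-- `S(z) = Σ_{i=0}^{N-1} s_i z^i` for the first sequence. -/
noncomputable def DHSval1 (p q g x : ℕ) (z : ℂ) : ℂ :=
  ∑ i ∈ Finset.range (p * q), (DHs1 p q g x i : ℂ) * z ^ i

/-- `S(z) = Σ_{i=0}^{N-1} s_i z^i` for the second sequence. -/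
noncomputable def DHSval2 (p q g x : ℕ) (z : ℂ) : ℂ :=
  ∑ i ∈ Finset.range (p * q), (DHs2 p q g x i : ℂ) * z ^ i

/-- `S(2) = Σ_{i=0}^{N-1} s_i 2^i` for the first sequence, as a natural number. -/
def DHS2num1 (p q g x : ℕ) : ℕ := ∑ i ∈ Finset.range (p * q), DHs1 p q g x i * 2 ^ i

/-- `S(2) = Σ_{i=0}^{N-1} s_i 2^i` for the second sequence, as a natural number. -/
def DHS2num2 (p q g x : ℕ) : ℕ := ∑ i ∈ Finset.range (p * q), DHs2 p q g x i * 2 ^ i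

/-- Nonzero quadratic residues modulo `q`. -/
def DHQR (q : ℕ) [NeZero q] : Finset (ZMod q) :=
  Finset.univ.filter (fun a => a ≠ 0 ∧ ∃ b : ZMod q, b * b = a)

/-- Quadratic nonresidues modulo `q`. -/
def DHQNR (q : ℕ) [NeZero q] : Finset (ZMod q) :=
  Finset.univ.filter (fun a => a ≠ 0 ∧ ¬∃ b : ZMod q, b * b = a)

set_option linter.unusedSectionVars false
set_option maxHeartbeats 1000000


section Zq
variable {q : ℕ} [NeZero q]

lemma gen_pow_one (hq : q.Prime) {gq : ZMod q} (hg : orderOf gq = q - 1) :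
    gq ^ (q - 1) = 1 := by rw [← hg]; exact pow_orderOf_eq_one gq

lemma gen_ne_zero (hq : q.Prime) {gq : ZMod q} (hg : orderOf gq = q - 1) : gq ≠ 0 := by
  haveI : Fact q.Prime := ⟨hq⟩
  intro h
  have h1 := gen_pow_one hq hg
  rw [h, zero_pow (by have := hq.two_le; omega)] at h1
  exact zero_ne_one h1

lemma gen_isUnit (hq : q.Prime) {gq : ZMod q} (hg : orderOf gq = q - 1) : IsUnit gq :=
  IsUnit.of_pow_eq_one (gen_pow_one hq hg) (by have := hq.two_le; omega)

lemma gen_pow_iff (hq : q.Prime) {gq : ZMod q} (hg : orderOf gq = q - 1) (m m' : ℕ) :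
    gq ^ m = gq ^ m' ↔ m ≡ m' [MOD q - 1] := by
  obtain ⟨u, hu⟩ := gen_isUnit hq hg
  have hou : orderOf u = q - 1 := by rw [← hg, ← hu, orderOf_units]
  rw [← hu]
  constructor
  · intro h
    have h2 : u ^ m = u ^ m' := by apply Units.ext; push_cast; exact h
    rw [← hou]
    exact pow_eq_pow_iff_modEq.mp h2
  · intro h
    have h2 : u ^ m = u ^ m' := pow_eq_pow_iff_modEq.mpr (hou ▸ h)
    exact_mod_cast congrArg Units.val h2

lemma gen_surj (hq : q.Prime) {gq : ZMod q} (hg : orderOf gq = q - 1)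
    {b : ZMod q} (hb : b ≠ 0) : ∃ m, m < q - 1 ∧ gq ^ m = b := by
  haveI : Fact q.Prime := ⟨hq⟩
  obtain ⟨u, hu⟩ := gen_isUnit hq hg
  have hou : orderOf u = q - 1 := by rw [← hg, ← hu, orderOf_units]
  set bv := (isUnit_iff_ne_zero.mpr hb).unit with hbv
  have hbval : (bv : ZMod q) = b := IsUnit.unit_spec _
  have htop : Subgroup.zpowers u = ⊤ := by
    apply Subgroup.eq_top_of_card_eq
    rw [Nat.card_zpowers, hou, Nat.card_eq_fintype_card, ZMod.card_units_eq_totient,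
      Nat.totient_prime hq]
  obtain ⟨k, hk⟩ := Subgroup.mem_zpowers_iff.mp (htop ▸ Subgroup.mem_top bv)
  have hq1 : (0:ℤ) < (q - 1 : ℕ) := by have := hq.two_le; omega
  refine ⟨(k % (q-1 : ℕ)).toNat, ?_, ?_⟩
  · have := Int.emod_lt_of_pos k hq1
    omega
  · have h2 : u ^ ((k % (q-1:ℕ)).toNat : ℤ) = u ^ k := by
      rw [Int.toNat_of_nonneg (Int.emod_nonneg k (by omega))]
      conv_rhs => rw [← Int.mul_ediv_add_emod k (q-1:ℕ)]
      rw [zpow_add, zpow_mul, zpow_natCast,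
        show u ^ (q-1:ℕ) = 1 by rw [← hou]; exact pow_orderOf_eq_one u, one_zpow, one_mul]
    have h3 := congrArg (Units.val) (h2.trans hk)
    rw [zpow_natCast] at h3
    push_cast at h3
    rw [hu] at h3
    rw [h3, hbval]

lemma gen_pow_ne_zero (hq : q.Prime) {gq : ZMod q} (hg : orderOf gq = q - 1) (m : ℕ) :
    gq ^ m ≠ 0 := by
  haveI : Fact q.Prime := ⟨hq⟩
  exact pow_ne_zero m (gen_ne_zero hq hg)

lemma gen_odd_not_square (hq : q.Prime) (hqo : Odd q) {gq : ZMod q} (hg : orderOf gq = q - 1)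
    (s : ℕ) : ¬ ∃ b : ZMod q, b * b = gq ^ (2*s+1) := by
  haveI : Fact q.Prime := ⟨hq⟩
  rintro ⟨b, hb⟩
  have hbne : b ≠ 0 := by
    intro h; rw [h, mul_zero] at hb; exact gen_pow_ne_zero hq hg _ hb.symm
  obtain ⟨m, _, hm⟩ := gen_surj hq hg hbne
  rw [← hm, ← pow_add] at hb
  have h2 := (gen_pow_iff hq hg _ _).mp hb
  have h3 := h2.dvd
  obtain ⟨c, hc⟩ : 2 ∣ q - 1 := by obtain ⟨r, hr⟩ := hqo; have := hq.two_le; omega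
  have h4 : (2:ℤ) ∣ ((2*s+1 : ℕ):ℤ) - ((m+m : ℕ):ℤ) :=
    dvd_trans ⟨(c:ℤ), by push_cast; omega⟩ h3
  obtain ⟨w, hw⟩ := h4
  push_cast at hw
  omega

lemma gen_even_square (hq : q.Prime) {gq : ZMod q} (hg : orderOf gq = q - 1)
    (s : ℕ) : ∃ b : ZMod q, b * b = gq ^ (2*s) := ⟨gq ^ s, by rw [← pow_add]; ring_nf⟩

/-- QNR is the set of odd powers of the generator. -/
lemma QNR_eq_image (hq : q.Prime) (hqo : Odd q) {gq : ZMod q} (hg : orderOf gq = q - 1) :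
    DHQNR q = (Finset.range ((q-1)/2)).image (fun s => gq ^ (2*s+1)) := by
  haveI : Fact q.Prime := ⟨hq⟩
  obtain ⟨c, hc⟩ : ∃ c, q - 1 = 2*c ∧ 0 < c := by
    obtain ⟨r, hr⟩ := hqo; have := hq.two_le; exact ⟨(q-1)/2, by omega, by omega⟩
  apply Finset.Subset.antisymm
  · intro b hb
    rw [DHQNR, Finset.mem_filter] at hb
    obtain ⟨-, hbne, hbns⟩ := hb
    obtain ⟨m, hmlt, hm⟩ := gen_surj hq hg hbne
    rcases Nat.even_or_odd m with ⟨s, hs⟩ | ⟨s, hs⟩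
    · exact absurd (hm ▸ (by rw [hs, ← two_mul]; exact gen_even_square hq hg s)) hbns
    · rw [Finset.mem_image]
      exact ⟨s, Finset.mem_range.mpr (by omega), by rw [← hs, hm]⟩
  · intro b hb
    rw [Finset.mem_image] at hb
    obtain ⟨s, -, hs⟩ := hb
    rw [DHQNR, Finset.mem_filter]
    exact ⟨Finset.mem_univ _, hs ▸ gen_pow_ne_zero hq hg _,
      hs ▸ gen_odd_not_square hq hqo hg s⟩

lemma QR_eq_image (hq : q.Prime) (hqo : Odd q) {gq : ZMod q} (hg : orderOf gq = q - 1) :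
    DHQR q = (Finset.range ((q-1)/2)).image (fun s => gq ^ (2*s)) := by
  haveI : Fact q.Prime := ⟨hq⟩
  obtain ⟨c, hc⟩ : ∃ c, q - 1 = 2*c ∧ 0 < c := by
    obtain ⟨r, hr⟩ := hqo; have := hq.two_le; exact ⟨(q-1)/2, by omega, by omega⟩
  apply Finset.Subset.antisymm
  · intro b hb
    rw [DHQR, Finset.mem_filter] at hb
    obtain ⟨-, hbne, hbs⟩ := hb
    obtain ⟨m, hmlt, hm⟩ := gen_surj hq hg hbne
    rcases Nat.even_or_odd m with ⟨s, hs⟩ | ⟨s, hs⟩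
    · rw [Finset.mem_image]
      exact ⟨s, Finset.mem_range.mpr (by omega), by rw [← hm, hs, two_mul]⟩
    · exact absurd (hm ▸ hbs) (by rw [hs]; exact gen_odd_not_square hq hqo hg s)
  · intro b hb
    rw [Finset.mem_image] at hb
    obtain ⟨s, -, hs⟩ := hb
    rw [DHQR, Finset.mem_filter]
    exact ⟨Finset.mem_univ _, hs ▸ gen_pow_ne_zero hq hg _, hs ▸ gen_even_square hq hg s⟩

lemma gen_odd_injOn (hq : q.Prime) (hqo : Odd q) {gq : ZMod q} (hg : orderOf gq = q - 1) :
    Set.InjOn (fun s => gq ^ (2*s+1)) (Finset.range ((q-1)/2)) := by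
  intro s hs s' hs' h
  simp only [Finset.coe_range, Set.mem_Iio] at hs hs'
  have h2 := (gen_pow_iff hq hg _ _).mp h
  have h3 := h2.dvd
  obtain ⟨r, hr⟩ := hqo
  have := hq.two_le
  have h4 := Int.eq_zero_of_abs_lt_dvd h3 (by rw [abs_lt]; constructor <;> push_cast <;> omega)
  push_cast at h4
  omega

lemma gen_even_injOn (hq : q.Prime) (hqo : Odd q) {gq : ZMod q} (hg : orderOf gq = q - 1) :
    Set.InjOn (fun s => gq ^ (2*s)) (Finset.range ((q-1)/2)) := by
  intro s hs s' hs' h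
  simp only [Finset.coe_range, Set.mem_Iio] at hs hs'
  have h2 := (gen_pow_iff hq hg _ _).mp h
  have h3 := h2.dvd
  obtain ⟨r, hr⟩ := hqo
  have := hq.two_le
  have h4 := Int.eq_zero_of_abs_lt_dvd h3 (by rw [abs_lt]; constructor <;> push_cast <;> omega)
  push_cast at h4
  omega

lemma card_QNR (hq : q.Prime) (hqo : Odd q) {gq : ZMod q} (hg : orderOf gq = q - 1) :
    (DHQNR q).card = (q-1)/2 := by
  rw [QNR_eq_image hq hqo hg, Finset.card_image_of_injOn (gen_odd_injOn hq hqo hg),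
    Finset.card_range]

lemma card_QR (hq : q.Prime) (hqo : Odd q) {gq : ZMod q} (hg : orderOf gq = q - 1) :
    (DHQR q).card = (q-1)/2 := by
  rw [QR_eq_image hq hqo hg, Finset.card_image_of_injOn (gen_even_injOn hq hqo hg),
    Finset.card_range]

lemma mem_QR_ne_zero {u : ZMod q} (hu : u ∈ DHQR q) : u ≠ 0 :=
  (Finset.mem_filter.mp hu).2.1

lemma mem_QNR_ne_zero {u : ZMod q} (hu : u ∈ DHQNR q) : u ≠ 0 :=
  (Finset.mem_filter.mp hu).2.1

lemma image_mul_QNR_of_QR (hq : q.Prime) (hqo : Odd q) {gq : ZMod q}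
    (hg : orderOf gq = q - 1) {u : ZMod q} (hu : u ∈ DHQR q) :
    (DHQNR q).image (fun b => u * b) = DHQNR q := by
  haveI : Fact q.Prime := ⟨hq⟩
  have hcard : ((DHQNR q).image (fun b => u * b)).card = (DHQNR q).card :=
    Finset.card_image_of_injOn ((mul_right_injective₀ (mem_QR_ne_zero hu)).injOn)
  apply Finset.eq_of_subset_of_card_le _ (le_of_eq hcard.symm)
  intro z hz
  rw [Finset.mem_image] at hz
  obtain ⟨b, hb, hbz⟩ := hz
  rw [QR_eq_image hq hqo hg, Finset.mem_image] at hu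
  obtain ⟨a, -, ha⟩ := hu
  rw [QNR_eq_image hq hqo hg, Finset.mem_image] at hb
  obtain ⟨s, -, hs⟩ := hb
  rw [DHQNR, Finset.mem_filter]
  have hz2 : z = gq ^ (2*(a+s)+1) := by
    rw [← hbz, ← ha, ← hs, ← pow_add]; ring_nf
  exact ⟨Finset.mem_univ _, hz2 ▸ gen_pow_ne_zero hq hg _,
    hz2 ▸ gen_odd_not_square hq hqo hg _⟩

lemma image_mul_QNR_of_QNR (hq : q.Prime) (hqo : Odd q) {gq : ZMod q}
    (hg : orderOf gq = q - 1) {u : ZMod q} (hu : u ∈ DHQNR q) :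
    (DHQNR q).image (fun b => u * b) = DHQR q := by
  haveI : Fact q.Prime := ⟨hq⟩
  have hcard : ((DHQNR q).image (fun b => u * b)).card = (DHQR q).card := by
    rw [Finset.card_image_of_injOn ((mul_right_injective₀ (mem_QNR_ne_zero hu)).injOn),
      card_QNR hq hqo hg, card_QR hq hqo hg]
  apply Finset.eq_of_subset_of_card_le _ (le_of_eq hcard.symm)
  intro z hz
  rw [Finset.mem_image] at hz
  obtain ⟨b, hb, hbz⟩ := hz
  rw [QNR_eq_image hq hqo hg, Finset.mem_image] at hu
  obtain ⟨a, -, ha⟩ := hu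
  rw [QNR_eq_image hq hqo hg, Finset.mem_image] at hb
  obtain ⟨s, -, hs⟩ := hb
  rw [DHQR, Finset.mem_filter]
  have hz2 : z = gq ^ (2*(a+s+1)) := by
    rw [← hbz, ← ha, ← hs, ← pow_add]; ring_nf
  exact ⟨Finset.mem_univ _, hz2 ▸ gen_pow_ne_zero hq hg _, hz2 ▸ gen_even_square hq hg _⟩

end Zq

section Roots

lemma DHxi_prim (n : ℕ) (hn : n ≠ 0) : IsPrimitiveRoot (DHxi n) n :=
  Complex.isPrimitiveRoot_exp n hn

lemma DHxi_pow_self (n : ℕ) (hn : n ≠ 0) : DHxi n ^ n = 1 := (DHxi_prim n hn).pow_eq_one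

lemma pow_mod_of_root {z : ℂ} {n : ℕ} (h : z ^ n = 1) (a : ℕ) : z ^ a = z ^ (a % n) := by
  conv_lhs => rw [← Nat.div_add_mod a n]
  rw [pow_add, pow_mul, h, one_pow, one_mul]

lemma zeta_pow_nat {q : ℕ} {z : ℂ} (hz : z ^ q = 1) (m : ℕ) :
    z ^ m = z ^ ((m : ZMod q)).val := by
  rw [ZMod.val_natCast, pow_mod_of_root hz]

lemma DHxi_mul_pow_left (p q : ℕ) (hp : p ≠ 0) (hq : q ≠ 0) : DHxi (p*q) ^ p = DHxi q := by
  rw [DHxi, DHxi, ← Complex.exp_nat_mul]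
  congr 1
  have hp' : (p:ℂ) ≠ 0 := Nat.cast_ne_zero.mpr hp
  have hq' : (q:ℂ) ≠ 0 := Nat.cast_ne_zero.mpr hq
  push_cast
  field_simp

lemma sum_indicator {N : ℕ} (hN : 0 < N) (E : Finset (ZMod N)) (f : ℕ → ℂ) :
    ∑ i ∈ Finset.range N, (if (i : ZMod N) ∈ E then f i else 0) = ∑ d ∈ E, f d.val := by
  haveI : NeZero N := ⟨hN.ne'⟩
  classical
  rw [← Finset.sum_filter]
  refine Finset.sum_nbij' (i := fun i => ((i : ZMod N))) (j := fun d => d.val) ?_ ?_ ?_ ?_ ?_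
  · intro a ha; exact (Finset.mem_filter.mp ha).2
  · intro d hd
    rw [Finset.mem_filter, Finset.mem_range]
    constructor
    · exact ZMod.val_lt d
    · rw [ZMod.natCast_val, ZMod.cast_id]; exact hd
  · intro a ha
    exact ZMod.val_cast_of_lt (Finset.mem_range.mp (Finset.mem_filter.mp ha).1)
  · intro d hd; rw [ZMod.natCast_val, ZMod.cast_id]
  · intro a ha
    rw [ZMod.val_cast_of_lt (Finset.mem_range.mp (Finset.mem_filter.mp ha).1)]

end Roots

section Eta
variable {q : ℕ} [NeZero q]

lemma QR_union_QNR (hq : q.Prime) :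
    DHQR q ∪ DHQNR q = Finset.univ \ {(0 : ZMod q)} := by
  haveI : Fact q.Prime := ⟨hq⟩
  ext a
  simp only [DHQR, DHQNR, Finset.mem_union, Finset.mem_filter, Finset.mem_univ, true_and,
    Finset.mem_sdiff, Finset.mem_singleton]
  tauto

lemma QR_disj_QNR (hq : q.Prime) : Disjoint (DHQR q) (DHQNR q) := by
  rw [Finset.disjoint_left]
  intro a ha ha'
  exact (Finset.mem_filter.mp ha').2.2 (Finset.mem_filter.mp ha).2.2

lemma sum_univ_zeta (hq : q.Prime) : ∑ a : ZMod q, DHxi q ^ a.val = 0 := by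
  haveI : Fact q.Prime := ⟨hq⟩
  have h1 : ∑ i ∈ Finset.range q, DHxi q ^ i = 0 :=
    (DHxi_prim q (NeZero.ne q)).geom_sum_eq_zero hq.one_lt
  rw [← h1]
  refine Finset.sum_nbij' (i := fun a => a.val) (j := fun i => ((i : ZMod q))) ?_ ?_ ?_ ?_ ?_
  · intro a _; exact Finset.mem_range.mpr (ZMod.val_lt a)
  · intro i _; exact Finset.mem_univ _
  · intro a _; rw [ZMod.natCast_val, ZMod.cast_id]
  · intro i hi; exact ZMod.val_cast_of_lt (Finset.mem_range.mp hi)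
  · intro a _; rfl

lemma eta_add (hq : q.Prime) : DHeta q (DHQR q) + DHeta q (DHQNR q) = -1 := by
  haveI : Fact q.Prime := ⟨hq⟩
  have h0 := sum_univ_zeta hq
  rw [Finset.sum_eq_sum_sdiff_singleton_add (Finset.mem_univ (0 : ZMod q))] at h0
  rw [ZMod.val_zero, pow_zero] at h0
  rw [DHeta, DHeta, ← Finset.sum_union (QR_disj_QNR hq), QR_union_QNR hq]
  linear_combination h0

end Eta
section Main

variable {p q g x : ℕ}

lemma sum_range_mul_periodic (f : ℕ → ℂ) (c L : ℕ) (hper : ∀ j s, f (j*c + s) = f s) :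
    ∑ t ∈ Finset.range (L*c), f t = L * ∑ s ∈ Finset.range c, f s := by
  induction L with
  | zero => simp
  | succ n ih =>
    rw [Nat.succ_mul, Finset.sum_range_add, ih]
    have h2 : ∑ s ∈ Finset.range c, f (n*c + s) = ∑ s ∈ Finset.range c, f s :=
      Finset.sum_congr rfl (fun s _ => hper n s)
    rw [h2]
    push_cast
    ring

lemma val_red [NeZero (p*q)] (hq0 : q ≠ 0) (d : ZMod (p*q)) :
    ((d.val : ℕ) : ZMod q) = ZMod.castHom (dvd_mul_left q p) (ZMod q) d := by
  haveI : NeZero q := ⟨hq0⟩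
  rw [ZMod.castHom_apply, ZMod.natCast_val]

lemma inj_pair (hp : Nat.Prime p) (hq : Nat.Prime q)
    (hpo : Odd p) (hqo : Odd q) (hgcd : Nat.gcd (p - 1) (q - 1) = 2)
    (hgp : orderOf (g : ZMod p) = p - 1) (hgq : orderOf (g : ZMod q) = q - 1)
    (hxp : (x : ZMod p) = (g : ZMod p)) (hxq : (x : ZMod q) = 1)
    (c t i t' i' : ℕ) (ht : t < (p-1)*(q-1)/4) (hi : i < 2)
    (ht' : t' < (p-1)*(q-1)/4) (hi' : i' < 2)
    (heq : (g : ZMod (p*q)) ^ (2*t+c) * (x : ZMod (p*q)) ^ i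
         = (g : ZMod (p*q)) ^ (2*t'+c) * (x : ZMod (p*q)) ^ i') :
    t = t' ∧ i = i' := by
  haveI : NeZero q := ⟨hq.ne_zero⟩
  haveI : NeZero p := ⟨hp.ne_zero⟩
  obtain ⟨a, ha⟩ : 2 ∣ p - 1 := by obtain ⟨r, hr⟩ := hpo; have := hp.two_le; omega
  obtain ⟨b, hb⟩ : 2 ∣ q - 1 := by obtain ⟨r, hr⟩ := hqo; have := hq.two_le; omega
  have hM : (p-1)*(q-1)/4 = a*b := by
    rw [ha, hb, show 2*a*(2*b) = 4*(a*b) by ring, Nat.mul_div_cancel_left _ (by norm_num)]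
  -- reduce mod q
  have hq_eq : (g : ZMod q) ^ (2*t+c) = (g : ZMod q) ^ (2*t'+c) := by
    have := congrArg (ZMod.castHom (dvd_mul_left q p) (ZMod q)) heq
    simpa [map_mul, map_pow, map_natCast, hxq] using this
  have hQ := ((gen_pow_iff hq hgq _ _).mp hq_eq).dvd
  -- reduce mod p
  have hp_eq : (g : ZMod p) ^ (2*t+c+i) = (g : ZMod p) ^ (2*t'+c+i') := by
    have := congrArg (ZMod.castHom (dvd_mul_right p q) (ZMod p)) heq
    simp only [map_mul, map_pow, map_natCast, hxp] at this
    rw [← pow_add, ← pow_add] at this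
    exact this
  have hP := ((gen_pow_iff hp hgp _ _).mp hp_eq).dvd
  -- i = i'
  have hii : i = i' := by
    have h2 : (2:ℤ) ∣ ((2*t'+c+i' : ℕ):ℤ) - ((2*t+c+i : ℕ):ℤ) :=
      dvd_trans ⟨(a:ℤ), by push_cast; omega⟩ hP
    obtain ⟨w, hw⟩ := h2
    push_cast at hw
    omega
  subst hii
  -- t = t'
  refine ⟨?_, rfl⟩
  have hadvd : (a:ℤ) ∣ ((t':ℤ) - t) := by
    obtain ⟨w, hw⟩ := hP
    push_cast [ha] at hw
    exact ⟨w, by linarith⟩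
  have hbdvd : (b:ℤ) ∣ ((t':ℤ) - t) := by
    obtain ⟨w, hw⟩ := hQ
    push_cast [hb] at hw
    exact ⟨w, by linarith⟩
  have hab : Nat.Coprime a b := by
    have h4 : Nat.gcd (2*a) (2*b) = 2 := by rw [← ha, ← hb]; exact hgcd
    rw [Nat.gcd_mul_left] at h4
    have := hp.two_le
    unfold Nat.Coprime
    omega
  have hco : IsCoprime (a:ℤ) (b:ℤ) := Int.isCoprime_iff_gcd_eq_one.mpr (by
    rw [Int.gcd_natCast_natCast]; exact hab)
  have habdvd : ((a*b : ℕ):ℤ) ∣ ((t':ℤ) - t) := by push_cast; exact hco.mul_dvd hadvd hbdvd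
  rw [hM] at ht ht'
  have := Int.eq_zero_of_abs_lt_dvd habdvd (by
    rw [abs_lt]
    constructor <;> push_cast <;> omega)
  omega

lemma D1_eq_image (hp : Nat.Prime p) :
    DHD1 p q g x = ((Finset.range ((p-1)*(q-1)/4) ×ˢ Finset.range 2).image
      (fun ti => (g : ZMod (p*q)) ^ (2*ti.1+1) * (x : ZMod (p*q)) ^ ti.2)) := by
  rw [DHD1, DHD0, Finset.image_image]
  apply Finset.image_congr
  intro ti _
  simp only [Function.comp_apply]
  ring

lemma D1_disj_Q (hp : Nat.Prime p) (hq : Nat.Prime q)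
    (hgq : orderOf (g : ZMod q) = q - 1) (hxq : (x : ZMod q) = 1) :
    Disjoint (DHD1 p q g x) (DHQ p q) := by
  haveI : NeZero q := ⟨hq.ne_zero⟩
  rw [Finset.disjoint_left]
  intro a ha ha'
  rw [D1_eq_image hp, Finset.mem_image] at ha
  obtain ⟨ti, -, hti⟩ := ha
  rw [DHQ, Finset.mem_image] at ha'
  obtain ⟨k', -, hk'⟩ := ha'
  set φ := ZMod.castHom (dvd_mul_left q p) (ZMod q)
  have h1 : φ a = (g : ZMod q) ^ (2*ti.1+1) := by
    rw [← hti]; simp [map_mul, map_pow, map_natCast, hxq, φ]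
  have h2 : φ a = 0 := by
    rw [← hk']
    simp only [map_natCast, φ]
    push_cast [ZMod.natCast_self]
    ring
  rw [h2] at h1
  exact gen_pow_ne_zero hq hgq _ h1.symm

end Main
section Main2

variable {p q g x : ℕ}

lemma Sval2_eval [NeZero q] (hp : Nat.Prime p) (hq : Nat.Prime q)
    (hpo : Odd p) (hqo : Odd q) (hgcd : Nat.gcd (p - 1) (q - 1) = 2)
    (hgp : orderOf (g : ZMod p) = p - 1) (hgq : orderOf (g : ZMod q) = q - 1)
    (hxp : (x : ZMod p) = (g : ZMod p)) (hxq : (x : ZMod q) = 1) (k : ℕ) :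
    DHSval2 p q g x (DHxi q ^ k) =
      ((p:ℂ) - 1) * (1 + ∑ b ∈ DHQNR q, DHxi q ^ (((k : ZMod q) * b).val)) := by
  haveI : NeZero q := ⟨hq.ne_zero⟩
  haveI : NeZero p := ⟨hp.ne_zero⟩
  have hN : 0 < p * q := Nat.mul_pos hp.pos hq.pos
  haveI : NeZero (p*q) := ⟨hN.ne'⟩
  have hζ : (DHxi q) ^ q = 1 := DHxi_pow_self q hq.ne_zero
  set ζ := DHxi q with hζdef
  set w := ζ ^ k with hwdef
  set u := (k : ZMod q) with hudef
  rw [DHSval2]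
  have hstep : ∀ i ∈ Finset.range (p*q), (DHs2 p q g x i : ℂ) * w ^ i =
      if (i : ZMod (p*q)) ∈ DHD1 p q g x ∪ DHQ p q then w ^ i else 0 := by
    intro i _
    rw [DHs2]
    split_ifs <;> simp
  rw [Finset.sum_congr rfl hstep, sum_indicator hN,
    Finset.sum_union (D1_disj_Q hp hq hgq hxq)]
  -- the Q part
  have hQsum : ∑ d ∈ DHQ p q, w ^ d.val = (p:ℂ) - 1 := by
    have hval : ∀ k' ∈ Finset.Icc 1 (p-1), ((k'*q : ℕ) : ZMod (p*q)).val = k'*q := by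
      intro k' hk'
      rw [Finset.mem_Icc] at hk'
      apply ZMod.val_cast_of_lt
      calc k'*q ≤ (p-1)*q := Nat.mul_le_mul_right q hk'.2
        _ < p*q := (Nat.mul_lt_mul_right hq.pos).mpr (by have := hp.two_le; omega)
    rw [DHQ, Finset.sum_image (by
      intro k1 h1 k2 h2 hke
      have := congrArg ZMod.val hke
      rw [hval k1 h1, hval k2 h2] at this
      have := hq.pos
      exact Nat.eq_of_mul_eq_mul_right hq.pos (by omega))]
    have hones : ∀ k' ∈ Finset.Icc 1 (p-1), w ^ ((k'*q : ℕ) : ZMod (p*q)).val = 1 := by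
      intro k' hk'
      rw [hval k' hk', hwdef, ← pow_mul, show k*(k'*q) = q*(k*k') by ring, pow_mul, hζ,
        one_pow]
    rw [Finset.sum_congr rfl hones, Finset.sum_const, Nat.card_Icc, nsmul_eq_mul, mul_one]
    have h9 : p - 1 + 1 - 1 = p - 1 := by omega
    rw [h9, Nat.cast_sub hp.one_le, Nat.cast_one]
  -- the D1 part
  obtain ⟨a, ha⟩ : 2 ∣ p - 1 := by obtain ⟨r, hr⟩ := hpo; have := hp.two_le; omega
  obtain ⟨b, hb2⟩ : 2 ∣ q - 1 := by obtain ⟨r, hr⟩ := hqo; have := hq.two_le; omega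
  have hb2' : b = (q-1)/2 := by omega
  have hM : (p-1)*(q-1)/4 = a*b := by
    rw [ha, hb2, show 2*a*(2*b) = 4*(a*b) by ring, Nat.mul_div_cancel_left _ (by norm_num)]
  have hD1 : ∑ d ∈ DHD1 p q g x, w ^ d.val
      = ((p:ℂ) - 1) * ∑ s ∈ Finset.range b, ζ ^ ((u * (g : ZMod q) ^ (2*s+1)).val) := by
    rw [D1_eq_image hp, Finset.sum_image (by
      intro ti hti ti' hti' he
      rw [Finset.mem_coe, Finset.mem_product, Finset.mem_range, Finset.mem_range] at hti hti'
      have := inj_pair hp hq hpo hqo hgcd hgp hgq hxp hxq 1 ti.1 ti.2 ti'.1 ti'.2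
        hti.1 hti.2 hti'.1 hti'.2 he
      exact Prod.ext this.1 this.2)]
    have hterm : ∀ ti ∈ Finset.range ((p-1)*(q-1)/4) ×ˢ Finset.range 2,
        w ^ ((g : ZMod (p*q)) ^ (2*ti.1+1) * (x : ZMod (p*q)) ^ ti.2).val
        = ζ ^ ((u * (g : ZMod q) ^ (2*ti.1+1)).val) := by
      intro ti _
      rw [hwdef, ← pow_mul, zeta_pow_nat hζ]
      congr 2
      push_cast
      rw [val_red hq.ne_zero]
      simp [map_mul, map_pow, map_natCast, hxq, hudef]
    rw [Finset.sum_congr rfl hterm, Finset.sum_product]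
    simp only [Finset.sum_const, Finset.card_range, nsmul_eq_mul, Nat.cast_ofNat]
    rw [← Finset.mul_sum, hM]
    have hper : ∀ j s, ζ ^ ((u * (g : ZMod q) ^ (2*(j*b+s)+1)).val)
        = ζ ^ ((u * (g : ZMod q) ^ (2*s+1)).val) := by
      intro j s
      have hexp : 2*(j*b+s)+1 = (2*s+1) + (2*b)*j := by ring
      rw [hexp, pow_add, pow_mul, ← hb2, gen_pow_one hq hgq, one_pow, mul_one]
    rw [sum_range_mul_periodic _ b a hper]
    have hcast : ((2*a : ℕ) : ℂ) = (p:ℂ) - 1 := by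
      rw [← ha, Nat.cast_sub hp.one_le, Nat.cast_one]
    push_cast at hcast
    ring_nf
    ring_nf at hcast
    rw [mul_right_comm (a:ℂ), hcast]
    ring
  rw [hQsum, hD1]
  -- convert range b sum to QNR sum
  have hQNR : ∑ s ∈ Finset.range b, ζ ^ ((u * (g : ZMod q) ^ (2*s+1)).val)
      = ∑ b' ∈ DHQNR q, ζ ^ ((u * b').val) := by
    rw [QNR_eq_image hq hqo hgq, Finset.sum_image (by
      have h := gen_odd_injOn hq hqo hgq
      intro s1 h1 s2 h2 he
      exact h (by simpa [hb2'] using h1) (by simpa [hb2'] using h2) he), hb2']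
  rw [hQNR]
  ring
end Main2


theorem stmt15 (p q g x : ℕ) [NeZero q] (hp : Nat.Prime p) (hq : Nat.Prime q)
    (hpo : Odd p) (hqo : Odd q) (hpq : p < q)
    (hgcd : Nat.gcd (p - 1) (q - 1) = 2)
    (hgp : orderOf (g : ZMod p) = p - 1) (hgq : orderOf (g : ZMod q) = q - 1)
    (hxp : (x : ZMod p) = (g : ZMod p)) (hxq : (x : ZMod q) = 1) :
    ∏ a ∈ DHP p q, DHSval2 p q g x (DHxi (p * q) ^ a.val) =
      (((p : ℂ) - 1) ^ 2 * DHeta q (DHQR q) * DHeta q (DHQNR q)) ^ ((q - 1) / 2) := by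
  haveI : NeZero p := ⟨hp.ne_zero⟩
  haveI : Fact q.Prime := ⟨hq⟩
  have hN : 0 < p * q := Nat.mul_pos hp.pos hq.pos
  haveI : NeZero (p*q) := ⟨hN.ne'⟩
  have hq2 := hq.two_le
  have hval : ∀ k ∈ Finset.Icc 1 (q-1), ((k*p : ℕ) : ZMod (p*q)).val = k*p := by
    intro k hk
    rw [Finset.mem_Icc] at hk
    apply ZMod.val_cast_of_lt
    calc k*p ≤ (q-1)*p := Nat.mul_le_mul_right p hk.2
      _ < q*p := (Nat.mul_lt_mul_right hp.pos).mpr (by omega)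
      _ = p*q := Nat.mul_comm q p
  rw [DHP, Finset.prod_image (by
    intro k1 h1 k2 h2 hke
    have := congrArg ZMod.val hke
    rw [hval k1 h1, hval k2 h2] at this
    exact Nat.eq_of_mul_eq_mul_right hp.pos this)]
  have hbody : ∀ k ∈ Finset.Icc 1 (q-1),
      DHSval2 p q g x (DHxi (p*q) ^ ((k*p : ℕ) : ZMod (p*q)).val)
      = ((p:ℂ) - 1) * (1 + ∑ b ∈ DHQNR q, DHxi q ^ (((k : ZMod q) * b).val)) := by
    intro k hk
    rw [hval k hk, show DHxi (p*q) ^ (k*p) = (DHxi (p*q) ^ p) ^ k by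
        rw [← pow_mul, mul_comm p k],
      DHxi_mul_pow_left p q hp.ne_zero hq.ne_zero]
    exact Sval2_eval hp hq hpo hqo hgcd hgp hgq hxp hxq k
  rw [Finset.prod_congr rfl hbody]
  have hre : ∏ k ∈ Finset.Icc 1 (q-1),
        ((p:ℂ) - 1) * (1 + ∑ b ∈ DHQNR q, DHxi q ^ (((k : ZMod q) * b).val))
      = ∏ u ∈ Finset.univ \ {(0 : ZMod q)},
        ((p:ℂ) - 1) * (1 + ∑ b ∈ DHQNR q, DHxi q ^ ((u * b).val)) := by
    refine Finset.prod_nbij' (i := fun k => ((k : ZMod q))) (j := fun u => u.val)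
      ?_ ?_ ?_ ?_ ?_
    · intro k hk
      rw [Finset.mem_Icc] at hk
      rw [Finset.mem_sdiff, Finset.mem_singleton]
      refine ⟨Finset.mem_univ _, fun h0 => ?_⟩
      have := congrArg ZMod.val h0
      rw [ZMod.val_cast_of_lt (by omega : k < q), ZMod.val_zero] at this
      omega
    · intro u hu
      rw [Finset.mem_sdiff, Finset.mem_singleton] at hu
      rw [Finset.mem_Icc]
      have h1 : u.val < q := ZMod.val_lt u
      have h2 : u.val ≠ 0 := fun h => hu.2 ((ZMod.val_eq_zero u).mp h)
      omega
    · intro k hk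
      rw [Finset.mem_Icc] at hk
      exact ZMod.val_cast_of_lt (by omega)
    · intro u hu
      rw [ZMod.natCast_val, ZMod.cast_id]
    · intro k hk; rfl
  rw [hre, ← QR_union_QNR hq, Finset.prod_union (QR_disj_QNR hq)]
  have hQRpart : ∏ u ∈ DHQR q,
      ((p:ℂ) - 1) * (1 + ∑ b ∈ DHQNR q, DHxi q ^ ((u * b).val))
      = (((p:ℂ) - 1) * (1 + DHeta q (DHQNR q))) ^ ((q-1)/2) := by
    have hu' : ∀ u ∈ DHQR q, ∑ b ∈ DHQNR q, DHxi q ^ ((u * b).val) = DHeta q (DHQNR q) := by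
      intro u hu
      rw [DHeta, ← Finset.sum_image (f := fun a : ZMod q => DHxi q ^ a.val)
          (fun x _ y _ h => mul_right_injective₀ (mem_QR_ne_zero hu) h),
        image_mul_QNR_of_QR hq hqo hgq hu]
    rw [Finset.prod_congr rfl (fun u hu => by rw [hu' u hu]), Finset.prod_const,
      card_QR hq hqo hgq]
  have hQNRpart : ∏ u ∈ DHQNR q,
      ((p:ℂ) - 1) * (1 + ∑ b ∈ DHQNR q, DHxi q ^ ((u * b).val))
      = (((p:ℂ) - 1) * (1 + DHeta q (DHQR q))) ^ ((q-1)/2) := by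
    have hu' : ∀ u ∈ DHQNR q, ∑ b ∈ DHQNR q, DHxi q ^ ((u * b).val) = DHeta q (DHQR q) := by
      intro u hu
      rw [DHeta, ← Finset.sum_image (f := fun a : ZMod q => DHxi q ^ a.val)
          (fun x _ y _ h => mul_right_injective₀ (mem_QNR_ne_zero hu) h),
        image_mul_QNR_of_QNR hq hqo hgq hu]
    rw [Finset.prod_congr rfl (fun u hu => by rw [hu' u hu]), Finset.prod_const,
      card_QNR hq hqo hgq]
  rw [hQRpart, hQNRpart, ← mul_pow]
  congr 1
  have hsum := eta_add hq
  linear_combination ((p:ℂ) - 1)^2 * hsum
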